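/- Let m ≥ 2 and let n ≥ 2 be a power of 2, and let q = n^{m−1} (a power of 2). Then there exists an MR (m, n, a=1, b=1, h=1) grid code over the field F_q; moreover it can be taken to be a Gabidulin construction, i.e., there is a map γ : [m]×[n] → F_q such that the grid code whose single global parity row has entries γ(i,j) in column (i,j) is MR. -/

import Mathlib

open Finset

/-- A subset of `[m] × [n]`, viewed as the edge set of a bipartite graph with left
vertex set `Fin m` and right vertex set `Fin n`, is a *simple cycle* (of length `2k`,
`k ≥ 2`) if it has the form
`{(i₁,j₁),(i₂,j₁),(i₂,j₂),(i₃,j₂),…,(i_k,j_k),(i₁,j_k)}`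
for pairwise distinct `i₁,…,i_k` and pairwise distinct `j₁,…,j_k`. -/
def IsSimpleCycle {m n : ℕ} (C : Finset (Fin m × Fin n)) : Prop :=
  ∃ k : ℕ, 2 ≤ k ∧ ∃ (I : ℕ → Fin m) (J : ℕ → Fin n),
    Set.InjOn I (Set.Iio k) ∧ Set.InjOn J (Set.Iio k) ∧
    C = ((Finset.range k).image fun ℓ => (I ℓ, J ℓ)) ∪
        ((Finset.range k).image fun ℓ => (I ((ℓ + 1) % k), J ℓ))

/-- An edge set is *acyclic* if it contains no simple cycle. -/
def IsAcyclicEdges {m n : ℕ} (E : Finset (Fin m × Fin n)) : Prop :=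
  ∀ C ⊆ E, ¬ IsSimpleCycle C

/-- The parity-check matrix of an `(m, n, a = 1, b = 1, h)` grid code over `F` with
global parity-check vectors `c`.  Rows are indexed by `Fin m ⊕ (Fin (n-1) ⊕ Fin h)`
(the `m` row checks, the first `n - 1` column checks, and the `h` global checks) and
columns by `Fin m × Fin n`. -/
def gridH (F : Type*) [Field F] (m n h : ℕ) (c : Fin m × Fin n → Fin h → F) :
    Matrix (Fin m ⊕ (Fin (n - 1) ⊕ Fin h)) (Fin m × Fin n) F :=
  Matrix.of fun r ij =>
    Sum.elim (fun i => if ij.1 = i then (1 : F) else 0)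
      (Sum.elim (fun j : Fin (n - 1) => if (ij.2 : ℕ) = (j : ℕ) then (1 : F) else 0)
        (fun k => c ij k)) r

/-- The grid code with global parity checks `c` is *maximally recoverable* (MR) if the
columns of its parity-check matrix indexed by `E` are linearly independent for every
pattern `E` which is the union of an acyclic edge set and at most `h` further edges. -/
def IsMR (F : Type*) [Field F] (m n h : ℕ) (c : Fin m × Fin n → Fin h → F) : Prop :=
  ∀ E : Finset (Fin m × Fin n),
    (∃ E' F' : Finset (Fin m × Fin n),
        IsAcyclicEdges E' ∧ F'.card ≤ h ∧ E = E' ∪ F') →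
    ((gridH F m n h c).submatrix id (fun e : E => (e : Fin m × Fin n))).rank = E.card

/-- A *spanning tree* of the complete bipartite graph on `[m] ⊔ [n]`: an acyclic edge
set with `m + n - 1` edges. -/
def IsSpanningTree {m n : ℕ} (T : Finset (Fin m × Fin n)) : Prop :=
  IsAcyclicEdges T ∧ T.card = m + n - 1

/-- `IsCycleSumOf c C s` says `C` is a simple cycle
`{(i₁,j₁),(i₂,j₁),…,(i_k,j_k),(i₁,j_k)}` and
`s = Σ_{ℓ=1}^{k} (c^{i_ℓ,j_ℓ} − c^{i_{ℓ+1},j_ℓ})` (with `i_{k+1} := i₁`) is the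
corresponding cycle sum `Σ_H(C) ∈ F^h`. -/
def IsCycleSumOf {F : Type*} [Field F] {m n h : ℕ} (c : Fin m × Fin n → Fin h → F)
    (C : Finset (Fin m × Fin n)) (s : Fin h → F) : Prop :=
  ∃ k : ℕ, 2 ≤ k ∧ ∃ (I : ℕ → Fin m) (J : ℕ → Fin n),
    Set.InjOn I (Set.Iio k) ∧ Set.InjOn J (Set.Iio k) ∧
    C = ((Finset.range k).image fun ℓ => (I ℓ, J ℓ)) ∪
        ((Finset.range k).image fun ℓ => (I ((ℓ + 1) % k), J ℓ)) ∧
    s = ∑ ℓ ∈ Finset.range k, (c (I ℓ, J ℓ) - c (I ((ℓ + 1) % k), J ℓ))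

/-- `IsGammaCycleSumOf γ C g` says `C` is a simple cycle and
`g = γ(C) = Σ_{ℓ=1}^{k} (γ(i_ℓ,j_ℓ) − γ(i_{ℓ+1},j_ℓ))`. -/
def IsGammaCycleSumOf {F : Type*} [Field F] {m n : ℕ} (γ : Fin m × Fin n → F)
    (C : Finset (Fin m × Fin n)) (g : F) : Prop :=
  ∃ k : ℕ, 2 ≤ k ∧ ∃ (I : ℕ → Fin m) (J : ℕ → Fin n),
    Set.InjOn I (Set.Iio k) ∧ Set.InjOn J (Set.Iio k) ∧
    C = ((Finset.range k).image fun ℓ => (I ℓ, J ℓ)) ∪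
        ((Finset.range k).image fun ℓ => (I ((ℓ + 1) % k), J ℓ)) ∧
    g = ∑ ℓ ∈ Finset.range k, (γ (I ℓ, J ℓ) - γ (I ((ℓ + 1) % k), J ℓ))

section Graph

variable {m n : ℕ}

/-- The edge set of the standard cycle determined by `k`, `I`, `J`. -/
def cycEdges (k : ℕ) (I : ℕ → Fin m) (J : ℕ → Fin n) : Finset (Fin m × Fin n) :=
  ((Finset.range k).image fun ℓ => (I ℓ, J ℓ)) ∪
    ((Finset.range k).image fun ℓ => (I ((ℓ + 1) % k), J ℓ))

lemma isSimpleCycle_cycEdges {k : ℕ} {I : ℕ → Fin m} {J : ℕ → Fin n} (hk : 2 ≤ k)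
    (hI : Set.InjOn I (Set.Iio k)) (hJ : Set.InjOn J (Set.Iio k)) :
    IsSimpleCycle (cycEdges k I J) :=
  ⟨k, hk, I, J, hI, hJ, rfl⟩

lemma mem_cycEdges {k : ℕ} {I : ℕ → Fin m} {J : ℕ → Fin n} {p : Fin m × Fin n} :
    p ∈ cycEdges k I J ↔ ∃ ℓ < k, p = (I ℓ, J ℓ) ∨ p = (I ((ℓ + 1) % k), J ℓ) := by
  simp only [cycEdges, Finset.mem_union, Finset.mem_image, Finset.mem_range]
  constructor
  · rintro (⟨ℓ, hℓ, rfl⟩ | ⟨ℓ, hℓ, rfl⟩)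
    · exact ⟨ℓ, hℓ, Or.inl rfl⟩
    · exact ⟨ℓ, hℓ, Or.inr rfl⟩
  · rintro ⟨ℓ, hℓ, (rfl | rfl)⟩
    · exact Or.inl ⟨ℓ, hℓ, rfl⟩
    · exact Or.inr ⟨ℓ, hℓ, rfl⟩

lemma mod_succ_ne {k ℓ : ℕ} (hk : 2 ≤ k) (hℓ : ℓ < k) : (ℓ + 1) % k ≠ ℓ := by
  intro h
  rcases Nat.lt_or_ge (ℓ + 1) k with h' | h'
  · rw [Nat.mod_eq_of_lt h'] at h; omega
  · have hk1 : ℓ + 1 = k := by omega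
    rw [hk1, Nat.mod_self] at h; omega

lemma mod_prev_succ {k ℓ : ℕ} (hk : 2 ≤ k) (hℓ : ℓ < k) :
    ((ℓ + (k - 1)) % k + 1) % k = ℓ := by
  rw [Nat.mod_add_mod]
  have : ℓ + (k - 1) + 1 = ℓ + k := by omega
  rw [this, Nat.add_mod_right, Nat.mod_eq_of_lt hℓ]

lemma mod_succ_prev {k ℓ : ℕ} (hk : 2 ≤ k) (hℓ : ℓ < k) :
    ((ℓ + 1) % k + (k - 1)) % k = ℓ := by
  rw [Nat.mod_add_mod]
  have : ℓ + 1 + (k - 1) = ℓ + k := by omega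
  rw [this, Nat.add_mod_right, Nat.mod_eq_of_lt hℓ]

lemma mod_prev_ne {k ℓ : ℕ} (hk : 2 ≤ k) (hℓ : ℓ < k) : (ℓ + (k - 1)) % k ≠ ℓ := by
  intro h
  have := mod_prev_succ hk hℓ
  rw [h] at this
  exact mod_succ_ne hk hℓ this

/-- A nonempty bipartite edge set with minimum degree `≥ 2` on both sides contains a
simple cycle (in explicit form). -/
lemma exists_cycle_of_min_degree_two (S : Finset (Fin m × Fin n)) (hS : S.Nonempty)
    (hL : ∀ p ∈ S, ∃ j', j' ≠ p.2 ∧ (p.1, j') ∈ S)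
    (hR : ∀ p ∈ S, ∃ i', i' ≠ p.1 ∧ (i', p.2) ∈ S) :
    ∃ k I J, 2 ≤ k ∧ Set.InjOn I (Set.Iio k) ∧ Set.InjOn J (Set.Iio k) ∧
      cycEdges k I J ⊆ S := by
  classical
  obtain ⟨p₀, hp₀⟩ := hS
  have hstep : ∀ p : Fin m × Fin n, ∃ q : Fin m × Fin n,
      p ∈ S → q.1 ≠ p.1 ∧ q.2 ≠ p.2 ∧ (q.1, p.2) ∈ S ∧ q ∈ S := by
    intro p
    by_cases hp : p ∈ S
    · obtain ⟨i', hi', hiS⟩ := hR p hp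
      obtain ⟨j', hj', hjS⟩ := hL (i', p.2) hiS
      exact ⟨(i', j'), fun _ => ⟨hi', hj', hiS, hjS⟩⟩
    · exact ⟨p, fun h => absurd h hp⟩
  choose T hT using hstep
  set W : ℕ → Fin m × Fin n := fun ℓ => T^[ℓ] p₀ with hW
  have hWsucc : ∀ ℓ, W (ℓ + 1) = T (W ℓ) := fun ℓ => Function.iterate_succ_apply' T ℓ p₀
  have hWS : ∀ ℓ, W ℓ ∈ S := by
    intro ℓ
    induction ℓ with
    | zero => exact hp₀
    | succ ℓ ih => rw [hWsucc]; exact (hT _ ih).2.2.2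
  set I : ℕ → Fin m := fun ℓ => (W ℓ).1 with hIdef
  set J : ℕ → Fin n := fun ℓ => (W ℓ).2 with hJdef
  have w1 : ∀ ℓ, (I ℓ, J ℓ) ∈ S := fun ℓ => by
    simpa only [hIdef, hJdef] using hWS ℓ
  have w2 : ∀ ℓ, (I (ℓ + 1), J ℓ) ∈ S := by
    intro ℓ
    have h1 : I (ℓ + 1) = (T (W ℓ)).1 := congrArg Prod.fst (hWsucc ℓ)
    rw [h1]
    exact (hT _ (hWS ℓ)).2.2.1
  have w3 : ∀ ℓ, I (ℓ + 1) ≠ I ℓ := by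
    intro ℓ
    have h1 : I (ℓ + 1) = (T (W ℓ)).1 := congrArg Prod.fst (hWsucc ℓ)
    rw [h1]
    exact (hT _ (hWS ℓ)).1
  have w4 : ∀ ℓ, J (ℓ + 1) ≠ J ℓ := by
    intro ℓ
    have h1 : J (ℓ + 1) = (T (W ℓ)).2 := congrArg Prod.snd (hWsucc ℓ)
    rw [h1]
    exact (hT _ (hWS ℓ)).2.1
  have hbad : ∃ b, ∃ a, a < b ∧ (I a = I b ∨ J a = J b) := by
    obtain ⟨a, b, hab, h⟩ := Finite.exists_ne_map_eq_of_infinite I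
    rcases hab.lt_or_gt with h' | h'
    · exact ⟨b, a, h', Or.inl h⟩
    · exact ⟨a, b, h', Or.inl h.symm⟩
  set b := Nat.find hbad with hbdef
  obtain ⟨a, hab, hOr⟩ := Nat.find_spec hbad
  have hmin : ∀ b' < b, ∀ a' < b', I a' ≠ I b' ∧ J a' ≠ J b' := by
    intro b' hb' a' ha'
    have h := Nat.find_min hbad hb'
    push_neg at h
    exact h a' ha'
  have hIinj : Set.InjOn I (Set.Iio b) := by
    intro x hx y hy hxy
    by_contra hne
    rcases Nat.lt_or_ge x y with h' | h'
    · exact (hmin y hy x h').1 hxy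
    · exact (hmin x hx y (by omega)).1 hxy.symm
  have hJinj : Set.InjOn J (Set.Iio b) := by
    intro x hx y hy hxy
    by_contra hne
    rcases Nat.lt_or_ge x y with h' | h'
    · exact (hmin y hy x h').2 hxy
    · exact (hmin x hx y (by omega)).2 hxy.symm
  by_cases hIc : ∃ a', a' < b ∧ I a' = I b
  · obtain ⟨a, hab, hIa⟩ := hIc
    set k := b - a with hkdef
    have hk2 : 2 ≤ k := by
      by_contra hlt
      have hk1 : k = 1 := by omega
      have hba : b = a + 1 := by omega
      exact w3 a (by rw [← hba, ← hIa])
    refine ⟨k, fun ℓ => I (a + ℓ), fun ℓ => J (a + ℓ), hk2, ?_, ?_, ?_⟩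
    · intro x hx y hy hxy
      have := hIinj (show a + x ∈ Set.Iio b by simp only [Set.mem_Iio] at hx ⊢; omega)
        (show a + y ∈ Set.Iio b by simp only [Set.mem_Iio] at hy ⊢; omega) hxy
      omega
    · intro x hx y hy hxy
      have := hJinj (show a + x ∈ Set.Iio b by simp only [Set.mem_Iio] at hx ⊢; omega)
        (show a + y ∈ Set.Iio b by simp only [Set.mem_Iio] at hy ⊢; omega) hxy
      omega
    · intro p hp
      rw [mem_cycEdges] at hp
      obtain ⟨ℓ, hℓ, hp | hp⟩ := hp
      · rw [hp]; exact w1 _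
      · rcases Nat.lt_or_ge (ℓ + 1) k with h' | h'
        · rw [hp, Nat.mod_eq_of_lt h', show a + (ℓ + 1) = (a + ℓ) + 1 by ring]
          exact w2 _
        · have hek : ℓ + 1 = k := by omega
          rw [hp, hek, Nat.mod_self]
          have h1 : I (a + 0) = I ((a + ℓ) + 1) := by
            rw [Nat.add_zero, hIa, show a + ℓ + 1 = b by omega]
          rw [h1]
          exact w2 _
  · have hJa : J a = J b := by
      rcases hOr with h | h
      · exact absurd ⟨a, hab, h⟩ hIc
      · exact h
    push_neg at hIc
    set k := b - a with hkdef
    have hk2 : 2 ≤ k := by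
      by_contra hlt
      have hba : b = a + 1 := by omega
      exact w4 a (by rw [← hba, ← hJa])
    refine ⟨k, fun ℓ => I (a + 1 + ℓ), fun ℓ => if ℓ = k - 1 then J a else J (a + 1 + ℓ),
      hk2, ?_, ?_, ?_⟩
    · intro x hx y hy hxy
      dsimp only at hxy
      simp only [Set.mem_Iio] at hx hy
      by_cases hxk : x = k - 1 <;> by_cases hyk : y = k - 1
      · omega
      · exfalso
        have hxb : a + 1 + x = b := by omega
        rw [hxb] at hxy
        exact hIc (a + 1 + y) (by omega) hxy.symm
      · exfalso
        have hyb : a + 1 + y = b := by omega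
        rw [hyb] at hxy
        exact hIc (a + 1 + x) (by omega) hxy
      · have := hIinj (show a + 1 + x ∈ Set.Iio b by simp only [Set.mem_Iio]; omega)
          (show a + 1 + y ∈ Set.Iio b by simp only [Set.mem_Iio]; omega) hxy
        omega
    · intro x hx y hy hxy
      dsimp only at hxy
      simp only [Set.mem_Iio] at hx hy
      by_cases hxk : x = k - 1 <;> by_cases hyk : y = k - 1
      · omega
      · exfalso
        rw [if_pos hxk, if_neg hyk] at hxy
        have := hJinj (show a ∈ Set.Iio b by simp only [Set.mem_Iio]; omega)
          (show a + 1 + y ∈ Set.Iio b by simp only [Set.mem_Iio]; omega) hxy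
        omega
      · exfalso
        rw [if_neg hxk, if_pos hyk] at hxy
        have := hJinj (show a + 1 + x ∈ Set.Iio b by simp only [Set.mem_Iio]; omega)
          (show a ∈ Set.Iio b by simp only [Set.mem_Iio]; omega) hxy
        omega
      · rw [if_neg hxk, if_neg hyk] at hxy
        have := hJinj (show a + 1 + x ∈ Set.Iio b by simp only [Set.mem_Iio]; omega)
          (show a + 1 + y ∈ Set.Iio b by simp only [Set.mem_Iio]; omega) hxy
        omega
    · intro p hp
      rw [mem_cycEdges] at hp
      obtain ⟨ℓ, hℓ, hp | hp⟩ := hp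
      · by_cases hℓk : ℓ = k - 1
        · rw [hp, if_pos hℓk, hℓk, show a + 1 + (k - 1) = b by omega, hJa]
          exact w1 b
        · rw [hp, if_neg hℓk]
          exact w1 _
      · by_cases hℓk : ℓ = k - 1
        · rw [hp, if_pos hℓk, hℓk, show k - 1 + 1 = k by omega, Nat.mod_self,
            show a + 1 + 0 = a + 1 by ring]
          exact w2 a
        · rw [hp, if_neg hℓk, Nat.mod_eq_of_lt (by omega : ℓ + 1 < k),
            show a + 1 + (ℓ + 1) = (a + 1 + ℓ) + 1 by ring]
          exact w2 _

/-- An acyclic nonempty edge set has strictly fewer edges than vertices. -/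
lemma acyclic_card_lt :
    ∀ N (T : Finset (Fin m × Fin n)), T.card ≤ N → IsAcyclicEdges T → T.Nonempty →
      T.card < (T.image Prod.fst).card + (T.image Prod.snd).card := by
  intro N
  induction N with
  | zero =>
    intro T h hT hne
    rw [Nat.le_zero, Finset.card_eq_zero] at h
    simp [h] at hne
  | succ N ih =>
    intro T hcard hT hne
    by_cases hleaf : ∃ p ∈ T, (∀ q ∈ T, q.1 = p.1 → q = p) ∨ (∀ q ∈ T, q.2 = p.2 → q = p)
    · obtain ⟨p, hp, hcase⟩ := hleaf
      set T' := T.erase p with hT'def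
      have hT'sub : T' ⊆ T := Finset.erase_subset _ _
      have hT' : IsAcyclicEdges T' := fun C hC => hT C (hC.trans hT'sub)
      have hc' : T'.card = T.card - 1 := Finset.card_erase_of_mem hp
      have hTpos : 0 < T.card := Finset.card_pos.2 hne
      by_cases hne' : T'.Nonempty
      · have IH := ih T' (by omega) hT' hne'
        have h2f : (T'.image Prod.fst).card ≤ (T.image Prod.fst).card :=
          Finset.card_le_card (Finset.image_subset_image hT'sub)
        have h2s : (T'.image Prod.snd).card ≤ (T.image Prod.snd).card :=
          Finset.card_le_card (Finset.image_subset_image hT'sub)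
        rcases hcase with hcase | hcase
        · have himg : T'.image Prod.fst = (T.image Prod.fst).erase p.1 := by
            ext i
            simp only [Finset.mem_image, Finset.mem_erase, hT'def, Finset.mem_erase]
            constructor
            · rintro ⟨q, ⟨hqp, hq⟩, rfl⟩
              exact ⟨fun h => hqp (hcase q hq h), q, hq, rfl⟩
            · rintro ⟨hip, q, hq, rfl⟩
              exact ⟨q, ⟨fun h => hip (by rw [h]), hq⟩, rfl⟩
          have h1 : (T'.image Prod.fst).card = (T.image Prod.fst).card - 1 := by
            rw [himg]; exact Finset.card_erase_of_mem (Finset.mem_image_of_mem _ hp)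
          have hpos : 0 < (T.image Prod.fst).card :=
            Finset.card_pos.2 ⟨p.1, Finset.mem_image_of_mem _ hp⟩
          omega
        · have himg : T'.image Prod.snd = (T.image Prod.snd).erase p.2 := by
            ext j
            simp only [Finset.mem_image, Finset.mem_erase, hT'def, Finset.mem_erase]
            constructor
            · rintro ⟨q, ⟨hqp, hq⟩, rfl⟩
              exact ⟨fun h => hqp (hcase q hq h), q, hq, rfl⟩
            · rintro ⟨hip, q, hq, rfl⟩
              exact ⟨q, ⟨fun h => hip (by rw [h]), hq⟩, rfl⟩
          have h1 : (T'.image Prod.snd).card = (T.image Prod.snd).card - 1 := by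
            rw [himg]; exact Finset.card_erase_of_mem (Finset.mem_image_of_mem _ hp)
          have hpos : 0 < (T.image Prod.snd).card :=
            Finset.card_pos.2 ⟨p.2, Finset.mem_image_of_mem _ hp⟩
          omega
      · rw [Finset.not_nonempty_iff_eq_empty] at hne'
        have hsing : T = {p} := by
          apply Finset.eq_singleton_iff_unique_mem.2
          refine ⟨hp, fun q hq => ?_⟩
          by_contra hqp
          exact (Finset.notMem_empty q) (hne' ▸ Finset.mem_erase.2 ⟨hqp, hq⟩)
        rw [hsing]
        simp
    · push_neg at hleaf
      have hL : ∀ p ∈ T, ∃ j', j' ≠ p.2 ∧ (p.1, j') ∈ T := by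
        intro p hp
        obtain ⟨q, hq, hq1, hqne⟩ := (hleaf p hp).1
        refine ⟨q.2, fun h => hqne (Prod.ext hq1 h), ?_⟩
        have : (p.1, q.2) = q := Prod.ext hq1.symm rfl
        rw [this]; exact hq
      have hR : ∀ p ∈ T, ∃ i', i' ≠ p.1 ∧ (i', p.2) ∈ T := by
        intro p hp
        obtain ⟨q, hq, hq2, hqne⟩ := (hleaf p hp).2
        refine ⟨q.1, fun h => hqne (Prod.ext h hq2), ?_⟩
        have : (q.1, p.2) = q := Prod.ext rfl hq2.symm
        rw [this]; exact hq
      obtain ⟨k, I, J, hk, hI, hJ, hsub⟩ := exists_cycle_of_min_degree_two T hne hL hR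
      exact absurd (isSimpleCycle_cycEdges hk hI hJ) (hT _ hsub)

end Graph

section ModAux
lemma mod_prev_succ' {k ℓ : ℕ} (hℓ : ℓ < k) :
    ((ℓ + (k - 1)) % k + 1) % k = ℓ := by
  rw [Nat.mod_add_mod]
  have : ℓ + (k - 1) + 1 = ℓ + k := by omega
  rw [this, Nat.add_mod_right, Nat.mod_eq_of_lt hℓ]

lemma mod_succ_prev' {k ℓ : ℕ} (hℓ : ℓ < k) :
    ((ℓ + 1) % k + (k - 1)) % k = ℓ := by
  rw [Nat.mod_add_mod]
  have : ℓ + 1 + (k - 1) = ℓ + k := by omega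
  rw [this, Nat.add_mod_right, Nat.mod_eq_of_lt hℓ]

lemma mod_prev_ne' {k ℓ : ℕ} (hk : 2 ≤ k) (hℓ : ℓ < k) : (ℓ + (k - 1)) % k ≠ ℓ := by
  intro h
  have h2 := mod_prev_succ' hℓ
  rw [h] at h2
  rcases Nat.lt_or_ge (ℓ + 1) k with h' | h'
  · rw [Nat.mod_eq_of_lt h'] at h2; omega
  · have hk1 : ℓ + 1 = k := by omega
    rw [hk1, Nat.mod_self] at h2; omega
end ModAux

section Alg

variable {F : Type*} [Field F]

/-- The key linear-independence computation. -/
lemma sum_alpha_ne_zero {m : ℕ} (hm : 2 ≤ m) (K : Subfield F)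
    (v : Fin (m - 1) → F) (hv : LinearIndependent K v)
    (α : Fin m → F) (hα : ∀ i : Fin m, α i = if h : (i : ℕ) < m - 1 then v ⟨i, h⟩ else 0)
    (k : ℕ) (hk : 2 ≤ k) (I : ℕ → Fin m) (hI : Set.InjOn I (Set.Iio k))
    (d : ℕ → K) (hd : ∀ ℓ < k, d ℓ ≠ 0) :
    ∑ ℓ ∈ Finset.range k, (d ℓ : F) * α (I ℓ) ≠ 0 := by
  classical
  intro h0
  have hm1 : 0 < m - 1 := by omega
  set π : ℕ → Fin (m - 1) :=
    fun ℓ => if h : (I ℓ : ℕ) < m - 1 then ⟨I ℓ, h⟩ else ⟨0, hm1⟩ with hπdef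
  set s := (Finset.range k).filter (fun ℓ => (I ℓ : ℕ) < m - 1) with hsdef
  have hsum : ∑ ℓ ∈ s, (d ℓ : F) * v (π ℓ) = 0 := by
    have h1 : ∑ ℓ ∈ s, (d ℓ : F) * α (I ℓ) = ∑ ℓ ∈ Finset.range k, (d ℓ : F) * α (I ℓ) := by
      apply Finset.sum_subset (Finset.filter_subset _ _)
      intro ℓ hℓ hℓs
      have hc : ¬ ((I ℓ : ℕ) < m - 1) := by
        intro hc
        exact hℓs (Finset.mem_filter.2 ⟨hℓ, hc⟩)
      rw [hα, dif_neg hc, mul_zero]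
    rw [← h0, ← h1]
    apply Finset.sum_congr rfl
    intro ℓ hℓ
    have hc : (I ℓ : ℕ) < m - 1 := (Finset.mem_filter.1 hℓ).2
    rw [hα, dif_pos hc, hπdef]
    simp only [dif_pos hc]
  set g : Fin (m - 1) → K := fun i => ∑ ℓ ∈ s.filter (fun ℓ => π ℓ = i), d ℓ with hgdef
  have hfib : ∑ i : Fin (m - 1), (g i : F) * v i = 0 := by
    rw [← hsum, ← Finset.sum_fiberwise_of_maps_to (fun x _ => Finset.mem_univ (π x))
      (fun ℓ => (d ℓ : F) * v (π ℓ))]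
    apply Finset.sum_congr rfl
    intro i _
    have hcoe : ((g i : K) : F) = ∑ ℓ ∈ s.filter (fun ℓ => π ℓ = i), (d ℓ : F) := by
      rw [hgdef]
      exact AddSubmonoidClass.coe_finset_sum d _
    rw [hcoe, Finset.sum_mul]
    apply Finset.sum_congr rfl
    intro ℓ hℓ
    rw [(Finset.mem_filter.1 hℓ).2]
  have hg0 : ∀ i, g i = 0 := by
    have hsmul : ∑ i : Fin (m - 1), g i • v i = 0 := by
      rw [← hfib]
      apply Finset.sum_congr rfl
      intro i _
      rw [Algebra.smul_def]
      rfl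
    exact Fintype.linearIndependent_iff.mp hv g hsmul
  -- find a good index
  have hne : I 0 ≠ I 1 := by
    intro h
    have := hI (by simp only [Set.mem_Iio]; omega : (0:ℕ) ∈ Set.Iio k)
      (by simp only [Set.mem_Iio]; omega : (1:ℕ) ∈ Set.Iio k) h
    omega
  have hgood : ∃ ℓ₀, ℓ₀ < k ∧ (I ℓ₀ : ℕ) < m - 1 := by
    by_cases h0' : (I 0 : ℕ) < m - 1
    · exact ⟨0, by omega, h0'⟩
    · refine ⟨1, by omega, ?_⟩
      by_contra h1'
      have e0 : (I 0 : ℕ) = m - 1 := by have := (I 0).isLt; omega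
      have e1 : (I 1 : ℕ) = m - 1 := by have := (I 1).isLt; omega
      exact hne (Fin.ext (by omega))
  obtain ⟨ℓ₀, hℓ₀k, hℓ₀⟩ := hgood
  have hfiber : s.filter (fun ℓ => π ℓ = π ℓ₀) = {ℓ₀} := by
    ext ℓ
    simp only [Finset.mem_filter, Finset.mem_singleton, hsdef, Finset.mem_range]
    constructor
    · rintro ⟨⟨hℓk, hℓm⟩, hπ⟩
      rw [hπdef] at hπ
      simp only [dif_pos hℓm, dif_pos hℓ₀] at hπ
      rw [Fin.mk.injEq] at hπ
      exact hI (Set.mem_Iio.2 hℓk) (Set.mem_Iio.2 hℓ₀k) (Fin.ext hπ)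
    · rintro rfl
      exact ⟨⟨hℓ₀k, hℓ₀⟩, rfl⟩
  have : g (π ℓ₀) = d ℓ₀ := by
    rw [hgdef]
    simp only [hfiber, Finset.sum_singleton]
  exact hd ℓ₀ hℓ₀k (by rw [← this, hg0])

/-- The Gabidulin-type cycle-sum non-vanishing. -/
lemma gamma_cycle_sum_ne {m n : ℕ} (hm : 2 ≤ m) (K : Subfield F)
    (v : Fin (m - 1) → F) (hv : LinearIndependent K v)
    (β : Fin n → K) (hβ : Function.Injective β)
    (α : Fin m → F) (hα : ∀ i : Fin m, α i = if h : (i : ℕ) < m - 1 then v ⟨i, h⟩ else 0)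
    (γ : Fin m × Fin n → F) (hγ : ∀ p, γ p = (β p.2 : F) * α p.1)
    (k : ℕ) (hk : 2 ≤ k) (I : ℕ → Fin m) (J : ℕ → Fin n)
    (hI : Set.InjOn I (Set.Iio k)) (hJ : Set.InjOn J (Set.Iio k)) :
    ∑ ℓ ∈ Finset.range k, (γ (I ℓ, J ℓ) - γ (I ((ℓ + 1) % k), J ℓ)) ≠ 0 := by
  have hre : ∑ ℓ ∈ Finset.range k, (β (J ℓ) : F) * α (I ((ℓ + 1) % k)) =
      ∑ ℓ ∈ Finset.range k, (β (J ((ℓ + (k - 1)) % k)) : F) * α (I ℓ) := by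
    apply Finset.sum_nbij' (fun ℓ => (ℓ + 1) % k) (fun ℓ => (ℓ + (k - 1)) % k)
    · intro a ha
      exact Finset.mem_range.2 (Nat.mod_lt _ (by omega))
    · intro a ha
      exact Finset.mem_range.2 (Nat.mod_lt _ (by omega))
    · intro a ha
      exact mod_succ_prev' (Finset.mem_range.1 ha)
    · intro a ha
      exact mod_prev_succ' (Finset.mem_range.1 ha)
    · intro a ha
      rw [mod_succ_prev' (Finset.mem_range.1 ha)]
  have hsplit : ∑ ℓ ∈ Finset.range k, (γ (I ℓ, J ℓ) - γ (I ((ℓ + 1) % k), J ℓ)) =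
      ∑ ℓ ∈ Finset.range k,
        ((β (J ℓ) - β (J ((ℓ + (k - 1)) % k)) : K) : F) * α (I ℓ) := by
    simp only [hγ]
    rw [Finset.sum_sub_distrib, hre, ← Finset.sum_sub_distrib]
    apply Finset.sum_congr rfl
    intro ℓ hℓ
    push_cast
    ring
  rw [hsplit]
  apply sum_alpha_ne_zero hm K v hv α hα k hk I hI
  intro ℓ hℓ
  have hmodlt : (ℓ + (k - 1)) % k < k := Nat.mod_lt _ (by omega)
  have hmodne : (ℓ + (k - 1)) % k ≠ ℓ := mod_prev_ne' hk hℓ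
  intro hzero
  rw [sub_eq_zero] at hzero
  exact hmodne (hJ (Set.mem_Iio.2 hmodlt) (Set.mem_Iio.2 hℓ) (hβ hzero).symm)

end Alg

section Exists

lemma exists_K_v_beta (m n : ℕ) (hm : 2 ≤ m) (hn2 : 2 ≤ n) (hn : ∃ t : ℕ, n = 2 ^ t)
    (F : Type*) [Field F] [Fintype F] (hcard : Fintype.card F = n ^ (m - 1)) :
    ∃ (K : Subfield F) (v : Fin (m - 1) → F) (β : Fin n → K),
      LinearIndependent K v ∧ Function.Injective β := by
  classical
  obtain ⟨t, hnt⟩ := hn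
  have ht1 : 1 ≤ t := by
    by_contra h
    have : t = 0 := by omega
    rw [this] at hnt; omega
  have hcard2 : Fintype.card F = 2 ^ (t * (m - 1)) := by
    rw [hcard, hnt, ← pow_mul]
  -- characteristic 2
  haveI : CharP F (ringChar F) := ringChar.charP F
  have hdvd : ringChar F ∣ 2 ^ (t * (m - 1)) := by
    rw [← hcard2]
    exact (CharP.cast_eq_zero_iff F (ringChar F) _).1 (FiniteField.cast_card_eq_zero F)
  have hprime : (ringChar F).Prime := CharP.char_is_prime F (ringChar F)
  have hr2 : ringChar F = 2 :=
    (Nat.prime_dvd_prime_iff_eq hprime Nat.prime_two).1 (hprime.dvd_of_dvd_pow hdvd)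
  haveI hchar : CharP F 2 := hr2 ▸ ringChar.charP F
  -- the subfield of solutions of x^n = x
  have hn0 : n ≠ 0 := by omega
  let K : Subfield F :=
    { carrier := {x : F | x ^ n = x}
      mul_mem' := by
        intro a b ha hb
        simp only [Set.mem_setOf_eq] at *
        rw [mul_pow, ha, hb]
      one_mem' := by simp
      add_mem' := by
        intro a b ha hb
        simp only [Set.mem_setOf_eq] at *
        rw [hnt] at ha hb ⊢
        rw [add_pow_char_pow, ha, hb]
      zero_mem' := by simp [zero_pow hn0]
      neg_mem' := by
        intro a ha
        simp only [Set.mem_setOf_eq] at *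
        rw [CharTwo.neg_eq, ha]
      inv_mem' := by
        intro a ha
        simp only [Set.mem_setOf_eq] at *
        rw [inv_pow, ha] }
  have hKiff : ∀ x : F, x ∈ K ↔ x ^ n = x := fun x => Iff.rfl
  set d := n - 1 with hddef
  have hd1 : 0 < d := by omega
  have hdn : d + 1 = n := by omega
  -- membership description
  have hKmem : ∀ x : F, x ∈ K ↔ (x = 0 ∨ x ^ d = 1) := by
    intro x
    rw [hKiff]
    constructor
    · intro hx
      by_cases hx0 : x = 0
      · exact Or.inl hx0
      · right
        have h1 : x ^ d * x = 1 * x := by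
          rw [one_mul, ← pow_succ, hdn, hx]
        exact mul_right_cancel₀ hx0 h1
    · rintro (rfl | hx)
      · rw [zero_pow hn0]
      · rw [← hdn, pow_succ, hx, one_mul]
  -- a primitive d-th root of unity
  have hNd : d ∣ Fintype.card F - 1 := by
    rw [hcard]
    have := Nat.sub_dvd_pow_sub_pow n 1 (m - 1)
    rwa [one_pow] at this
  have hN1 : 2 ≤ Fintype.card F := by
    rw [hcard]
    calc 2 ≤ n := hn2
    _ = n ^ 1 := (pow_one n).symm
    _ ≤ n ^ (m - 1) := Nat.pow_le_pow_right (by omega) (by omega)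
  obtain ⟨g, hg⟩ := IsCyclic.exists_ofOrder_eq_natCard (α := Fˣ)
  have hgord : orderOf g = Fintype.card F - 1 := by
    rw [hg, Nat.card_units, Nat.card_eq_fintype_card]
  have hgord0 : orderOf g ≠ 0 := by rw [hgord]; omega
  have hζord : orderOf (g ^ (orderOf g / d)) = d :=
    orderOf_pow_orderOf_div hgord0 (by rw [hgord]; exact hNd)
  have hζ : IsPrimitiveRoot ((g ^ (orderOf g / d) : Fˣ) : F) d := by
    apply IsPrimitiveRoot.coe_units_iff.2
    have := IsPrimitiveRoot.orderOf (g ^ (orderOf g / d))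
    rwa [hζord] at this
  -- counting K
  have h0nth : (0 : F) ∉ Polynomial.nthRootsFinset d (1 : F) := by
    intro h
    have := (Polynomial.mem_nthRootsFinset hd1 (1 : F)).1 h
    rw [zero_pow (by omega : d ≠ 0)] at this
    exact zero_ne_one this
  set SK : Finset F := insert (0 : F) (Polynomial.nthRootsFinset d (1 : F)) with hSKdef
  have hSKiff : ∀ x : F, x ∈ K ↔ x ∈ SK := by
    intro x
    rw [hKmem, hSKdef, Finset.mem_insert, Polynomial.mem_nthRootsFinset hd1 (1 : F)]
  have hSKcard : SK.card = n := by
    rw [hSKdef, Finset.card_insert_of_notMem h0nth, hζ.card_nthRootsFinset]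
    omega
  have hKcard : Nat.card ↥K = n := by
    have e : ↥K ≃ {x : F // x ∈ SK} := Equiv.subtypeEquivRight hSKiff
    rw [Nat.card_congr e, Nat.card_eq_finsetCard]
    exact hSKcard
  -- dimension of F over K
  haveI : Fintype ↥K := Fintype.ofFinite ↥K
  have hKfin : Fintype.card ↥K = n := by rw [← Nat.card_eq_fintype_card, hKcard]
  have hrank : Module.finrank ↥K F = m - 1 := by
    have hpow : n ^ (m - 1) = n ^ Module.finrank ↥K F := by
      rw [← hcard, ← hKfin]
      exact Module.card_eq_pow_finrank
    exact Nat.pow_right_injective hn2 hpow.symm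
  let b := Module.finBasis ↥K F
  let v : Fin (m - 1) → F := ⇑b ∘ (Fin.cast hrank.symm)
  have hv : LinearIndependent ↥K v :=
    b.linearIndependent.comp _ (Fin.cast_injective _)
  let e : ↥K ≃ Fin n := Finite.equivFinOfCardEq hKcard
  exact ⟨K, v, ⇑e.symm, hv, e.symm.injective⟩

end Exists

/-- Theorem 3.6.  Let `m ≥ 2` and let `n ≥ 2` be a power of `2`.  Over
any field with `q = n ^ (m - 1)` elements there is an MR `(m, n, a=1, b=1, h=1)` grid
code, which can be taken to be a Gabidulin construction: for `h = 1` this means the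
single global parity row has entries `γ(i,j)`. -/
theorem statement5 (m n : ℕ) (hm : 2 ≤ m) (hn2 : 2 ≤ n) (hn : ∃ t : ℕ, n = 2 ^ t)
    (F : Type*) [Field F] [Fintype F] (hcard : Fintype.card F = n ^ (m - 1)) :
    ∃ γ : Fin m × Fin n → F, IsMR F m n 1 (fun ij _ => γ ij) := by
  classical
  obtain ⟨K, v, β, hv, hβ⟩ := exists_K_v_beta m n hm hn2 hn F hcard
  set α : Fin m → F := fun i => if h : (i : ℕ) < m - 1 then v ⟨i, h⟩ else 0 with hαdef
  set γ : Fin m × Fin n → F := fun p => (β p.2 : F) * α p.1 with hγdef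
  have hcyc : ∀ (k : ℕ), 2 ≤ k → ∀ (I : ℕ → Fin m) (J : ℕ → Fin n),
      Set.InjOn I (Set.Iio k) → Set.InjOn J (Set.Iio k) →
      ∑ ℓ ∈ Finset.range k, (γ (I ℓ, J ℓ) - γ (I ((ℓ + 1) % k), J ℓ)) ≠ 0 := by
    intro k hk I J hI hJ
    exact gamma_cycle_sum_ne hm K v hv β hβ α (fun i => rfl) γ (fun p => rfl) k hk I J hI hJ
  refine ⟨γ, ?_⟩
  intro E hE
  obtain ⟨E', F', hE', hF', hEE⟩ := hE
  set A := (gridH F m n 1 fun ij _ => γ ij).submatrix id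
    (fun e : E => (e : Fin m × Fin n)) with hAdef
  have hinj : Function.Injective A.mulVecLin := by
    rw [← LinearMap.ker_eq_bot, LinearMap.ker_eq_bot']
    intro x hx
    have hx' : ∀ r, ∑ e : {p // p ∈ E}, A r e * x e = 0 := by
      intro r
      have h := congrFun hx r
      simpa [Matrix.mulVecLin_apply, Matrix.mulVec, dotProduct] using h
    set y : Fin m × Fin n → F := fun p => if h : p ∈ E then x ⟨p, h⟩ else 0 with hydef
    have hyE : ∀ p, p ∉ E → y p = 0 := fun p hp => dif_neg hp
    have hconv : ∀ c : Fin m × Fin n → F,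
        ∑ p : Fin m × Fin n, c p * y p = ∑ e : {p // p ∈ E}, c e * x e := by
      intro c
      calc ∑ p : Fin m × Fin n, c p * y p = ∑ p ∈ E, c p * y p :=
            (Finset.sum_subset (Finset.subset_univ E)
              (fun p _ hp => by rw [hyE p hp, mul_zero])).symm
        _ = ∑ e : {p // p ∈ E}, c e * y e := (Finset.sum_coe_sort E _).symm
        _ = ∑ e : {p // p ∈ E}, c e * x e := by
            apply Finset.sum_congr rfl
            intro e _
            rw [hydef]
            dsimp only
            rw [dif_pos e.2, Subtype.coe_eta]
    have hrow : ∀ r, ∑ p : Fin m × Fin n, (gridH F m n 1 fun ij _ => γ ij) r p * y p = 0 := by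
      intro r
      rw [hconv (fun p => (gridH F m n 1 fun ij _ => γ ij) r p)]
      have h := hx' r
      simpa [hAdef, Matrix.submatrix_apply] using h
    have hrowsum : ∀ i : Fin m, ∑ j : Fin n, y (i, j) = 0 := by
      intro i
      have h := hrow (Sum.inl i)
      simp only [gridH, Matrix.of_apply, Sum.elim_inl] at h
      rw [Fintype.sum_prod_type] at h
      rw [Finset.sum_eq_single i (fun b _ hb => Finset.sum_eq_zero (fun j _ => by simp [hb]))
        (fun hi => absurd (Finset.mem_univ i) hi)] at h
      simpa using h
    have hcolsum' : ∀ j : Fin n, (j : ℕ) < n - 1 → ∑ i : Fin m, y (i, j) = 0 := by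
      intro j hj
      have h := hrow (Sum.inr (Sum.inl ⟨(j : ℕ), hj⟩))
      simp only [gridH, Matrix.of_apply, Sum.elim_inr, Sum.elim_inl] at h
      rw [Fintype.sum_prod_type_right] at h
      rw [Finset.sum_eq_single j (fun b _ hb => Finset.sum_eq_zero (fun i _ => by
          simp only [ite_mul, one_mul, zero_mul]
          rw [if_neg]
          intro hval
          exact hb (Fin.ext hval)))
        (fun hj' => absurd (Finset.mem_univ j) hj')] at h
      simpa using h
    have hcolsum : ∀ j : Fin n, ∑ i : Fin m, y (i, j) = 0 := by
      have htot : ∑ j : Fin n, ∑ i : Fin m, y (i, j) = 0 := by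
        rw [Finset.sum_comm]
        exact Finset.sum_eq_zero (fun i _ => hrowsum i)
      set jl : Fin n := ⟨n - 1, by omega⟩ with hjl
      have hne : ∀ j : Fin n, j ≠ jl → (j : ℕ) < n - 1 := by
        intro j hj
        have h1 := j.isLt
        have h2 : (j : ℕ) ≠ n - 1 := by
          intro h
          exact hj (Fin.ext (by rw [h, hjl]))
        omega
      have hl : ∑ i : Fin m, y (i, jl) = 0 := by
        rw [Finset.sum_eq_single jl (fun b _ hb => hcolsum' b (hne b hb))
          (fun hj' => absurd (Finset.mem_univ jl) hj')] at htot
        exact htot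
      intro j
      by_cases hj : j = jl
      · rw [hj]; exact hl
      · exact hcolsum' j (hne j hj)
    have hglob : ∑ p : Fin m × Fin n, γ p * y p = 0 := by
      have h := hrow (Sum.inr (Sum.inr 0))
      simpa [gridH] using h
    set S : Finset (Fin m × Fin n) := Finset.univ.filter (fun p => y p ≠ 0) with hSdef
    have hSmem : ∀ p, p ∈ S ↔ y p ≠ 0 := by
      intro p; simp [hSdef]
    have hSE : S ⊆ E := by
      intro p hp
      by_contra hpE
      exact (hSmem p).1 hp (hyE p hpE)
    by_cases hSne : S.Nonempty
    · exfalso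
      have hdegL : ∀ p ∈ S, ∃ j', j' ≠ p.2 ∧ (p.1, j') ∈ S := by
        intro p hp
        by_contra hno
        push_neg at hno
        have h := hrowsum p.1
        rw [Finset.sum_eq_single p.2 (fun b _ hb => by
            have := hno b hb
            rw [hSmem] at this
            exact not_not.1 this)
          (fun h' => absurd (Finset.mem_univ p.2) h')] at h
        exact (hSmem p).1 hp (by rwa [Prod.mk.eta] at h)
      have hdegR : ∀ p ∈ S, ∃ i', i' ≠ p.1 ∧ (i', p.2) ∈ S := by
        intro p hp
        by_contra hno
        push_neg at hno
        have h := hcolsum p.2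
        rw [Finset.sum_eq_single p.1 (fun b _ hb => by
            have := hno b hb
            rw [hSmem] at this
            exact not_not.1 this)
          (fun h' => absurd (Finset.mem_univ p.1) h')] at h
        exact (hSmem p).1 hp (by rwa [Prod.mk.eta] at h)
      set L := S.image Prod.fst with hLdef
      set R := S.image Prod.snd with hRdef
      have hfibL : ∀ i ∈ L, 2 ≤ (S.filter (fun p => p.1 = i)).card := by
        intro i hi
        obtain ⟨p, hp, rfl⟩ := Finset.mem_image.1 hi
        obtain ⟨j', hj', hjS⟩ := hdegL p hp
        apply Finset.one_lt_card.2
        refine ⟨p, Finset.mem_filter.2 ⟨hp, rfl⟩,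
          (p.1, j'), Finset.mem_filter.2 ⟨hjS, rfl⟩, ?_⟩
        intro h
        exact hj' (congrArg Prod.snd h).symm
      have hfibR : ∀ j ∈ R, 2 ≤ (S.filter (fun p => p.2 = j)).card := by
        intro j hj
        obtain ⟨p, hp, rfl⟩ := Finset.mem_image.1 hj
        obtain ⟨i', hi', hiS⟩ := hdegR p hp
        apply Finset.one_lt_card.2
        refine ⟨p, Finset.mem_filter.2 ⟨hp, rfl⟩,
          (i', p.2), Finset.mem_filter.2 ⟨hiS, rfl⟩, ?_⟩
        intro h
        exact hi' (congrArg Prod.fst h).symm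
      have hfibsumL : S.card = ∑ i ∈ L, (S.filter (fun p => p.1 = i)).card :=
        Finset.card_eq_sum_card_fiberwise (fun p hp => Finset.mem_image_of_mem Prod.fst hp)
      have hfibsumR : S.card = ∑ j ∈ R, (S.filter (fun p => p.2 = j)).card :=
        Finset.card_eq_sum_card_fiberwise (fun p hp => Finset.mem_image_of_mem Prod.snd hp)
      have hcardL : 2 * L.card ≤ S.card := by
        rw [hfibsumL]
        calc 2 * L.card = ∑ _i ∈ L, 2 := by rw [Finset.sum_const, smul_eq_mul, mul_comm]
          _ ≤ _ := Finset.sum_le_sum hfibL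
      have hcardR : 2 * R.card ≤ S.card := by
        rw [hfibsumR]
        calc 2 * R.card = ∑ _j ∈ R, 2 := by rw [Finset.sum_const, smul_eq_mul, mul_comm]
          _ ≤ _ := Finset.sum_le_sum hfibR
      have hSF : S \ F' ⊆ E' := by
        intro p hp
        rw [Finset.mem_sdiff] at hp
        have hpE : p ∈ E' ∪ F' := by rw [← hEE]; exact hSE hp.1
        rcases Finset.mem_union.1 hpE with h | h
        · exact h
        · exact absurd h hp.2
      have hLne : L.Nonempty := hSne.image _
      have hL1 : 1 ≤ L.card := Finset.card_pos.2 hLne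
      have hS2 : 2 ≤ S.card := le_trans (by omega) hcardL
      have hSFne : (S \ F').Nonempty := by
        rw [Finset.sdiff_nonempty]
        intro hsub
        have := Finset.card_le_card hsub
        omega
      have hacyc := acyclic_card_lt (S \ F').card (S \ F') le_rfl
        (fun C hC => hE' C (hC.trans hSF)) hSFne
      have himgF : ((S \ F').image Prod.fst).card ≤ L.card :=
        Finset.card_le_card (Finset.image_subset_image Finset.sdiff_subset)
      have himgS : ((S \ F').image Prod.snd).card ≤ R.card :=
        Finset.card_le_card (Finset.image_subset_image Finset.sdiff_subset)
      have hcardSF : S.card ≤ (S \ F').card + F'.card := Finset.card_le_card_sdiff_add_card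
      have hupper : S.card ≤ L.card + R.card := by omega
      have hSLR : S.card = 2 * L.card ∧ S.card = 2 * R.card := by omega
      have hfibLe : ∀ i ∈ L, (S.filter (fun p => p.1 = i)).card = 2 := by
        intro i hi
        by_contra hne2
        have h3 : 2 < (S.filter (fun p => p.1 = i)).card :=
          lt_of_le_of_ne (hfibL i hi) (Ne.symm hne2)
        have hlt : ∑ _i ∈ L, 2 < ∑ i ∈ L, (S.filter (fun p => p.1 = i)).card :=
          Finset.sum_lt_sum hfibL ⟨i, hi, h3⟩
        rw [← hfibsumL, Finset.sum_const, smul_eq_mul] at hlt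
        omega
      have hfibRe : ∀ j ∈ R, (S.filter (fun p => p.2 = j)).card = 2 := by
        intro j hj
        by_contra hne2
        have h3 : 2 < (S.filter (fun p => p.2 = j)).card :=
          lt_of_le_of_ne (hfibR j hj) (Ne.symm hne2)
        have hlt : ∑ _j ∈ R, 2 < ∑ j ∈ R, (S.filter (fun p => p.2 = j)).card :=
          Finset.sum_lt_sum hfibR ⟨j, hj, h3⟩
        rw [← hfibsumR, Finset.sum_const, smul_eq_mul] at hlt
        omega
      obtain ⟨k, I, J, hk, hI, hJ, hCS⟩ := exists_cycle_of_min_degree_two S hSne hdegL hdegR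
      set C := cycEdges k I J with hCdef
      have hk0 : 0 < k := by omega
      have hSC : S = C := by
        refine Finset.Subset.antisymm ?_ hCS
        by_contra hnotsub
        have hSCne : (S \ C).Nonempty := by
          rw [Finset.sdiff_nonempty]
          exact hnotsub
        have hfstC : ∀ p ∈ S \ C, ∀ q ∈ C, q.1 ≠ p.1 := by
          intro p hp q hq hqp
          rw [Finset.mem_sdiff] at hp
          obtain ⟨ℓ, hℓ, hq'⟩ := mem_cycEdges.1 hq
          have hex : ∃ ℓ' < k, q.1 = I ℓ' := by
            rcases hq' with rfl | rfl
            · exact ⟨ℓ, hℓ, rfl⟩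
            · exact ⟨(ℓ + 1) % k, Nat.mod_lt _ hk0, rfl⟩
          obtain ⟨ℓ', hℓ'k, hℓ'⟩ := hex
          have hprevlt : (ℓ' + (k - 1)) % k < k := Nat.mod_lt _ hk0
          have he₁ : (I ℓ', J ℓ') ∈ C := mem_cycEdges.2 ⟨ℓ', hℓ'k, Or.inl rfl⟩
          have he₂ : (I ℓ', J ((ℓ' + (k - 1)) % k)) ∈ C := by
            refine mem_cycEdges.2 ⟨(ℓ' + (k - 1)) % k, hprevlt, Or.inr ?_⟩
            rw [mod_prev_succ hk hℓ'k]
          have hne12 : (I ℓ', J ℓ') ≠ (I ℓ', J ((ℓ' + (k - 1)) % k)) := by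
            intro h
            have hJeq := congrArg Prod.snd h
            exact mod_prev_ne hk hℓ'k
              (hJ (Set.mem_Iio.2 hprevlt) (Set.mem_Iio.2 hℓ'k) hJeq.symm)
          have hp1 : p.1 = I ℓ' := by rw [← hqp, hℓ']
          have h3 : 2 < (S.filter (fun r => r.1 = I ℓ')).card := by
            apply Finset.two_lt_card.2
            refine ⟨(I ℓ', J ℓ'), Finset.mem_filter.2 ⟨hCS he₁, rfl⟩,
              (I ℓ', J ((ℓ' + (k - 1)) % k)), Finset.mem_filter.2 ⟨hCS he₂, rfl⟩,
              p, Finset.mem_filter.2 ⟨hp.1, hp1⟩, hne12, ?_, ?_⟩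
            · intro h; exact hp.2 (h ▸ he₁)
            · intro h; exact hp.2 (h ▸ he₂)
          have := hfibLe (I ℓ') (Finset.mem_image.2 ⟨(I ℓ', J ℓ'), hCS he₁, rfl⟩)
          omega
        have hsndC : ∀ p ∈ S \ C, ∀ q ∈ C, q.2 ≠ p.2 := by
          intro p hp q hq hqp
          rw [Finset.mem_sdiff] at hp
          obtain ⟨ℓ, hℓ, hq'⟩ := mem_cycEdges.1 hq
          have hq2 : q.2 = J ℓ := by
            rcases hq' with rfl | rfl <;> rfl
          have hsucclt : (ℓ + 1) % k < k := Nat.mod_lt _ hk0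
          have he₁ : (I ℓ, J ℓ) ∈ C := mem_cycEdges.2 ⟨ℓ, hℓ, Or.inl rfl⟩
          have he₂ : (I ((ℓ + 1) % k), J ℓ) ∈ C := mem_cycEdges.2 ⟨ℓ, hℓ, Or.inr rfl⟩
          have hne12 : (I ℓ, J ℓ) ≠ (I ((ℓ + 1) % k), J ℓ) := by
            intro h
            have hIeq := congrArg Prod.fst h
            exact mod_succ_ne hk hℓ
              (hI (Set.mem_Iio.2 hsucclt) (Set.mem_Iio.2 hℓ) hIeq.symm)
          have hp2 : p.2 = J ℓ := by rw [← hqp, hq2]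
          have h3 : 2 < (S.filter (fun r => r.2 = J ℓ)).card := by
            apply Finset.two_lt_card.2
            refine ⟨(I ℓ, J ℓ), Finset.mem_filter.2 ⟨hCS he₁, rfl⟩,
              (I ((ℓ + 1) % k), J ℓ), Finset.mem_filter.2 ⟨hCS he₂, rfl⟩,
              p, Finset.mem_filter.2 ⟨hp.1, hp2⟩, hne12, ?_, ?_⟩
            · intro h; exact hp.2 (h ▸ he₁)
            · intro h; exact hp.2 (h ▸ he₂)
          have := hfibRe (J ℓ) (Finset.mem_image.2 ⟨(I ℓ, J ℓ), hCS he₁, rfl⟩)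
          omega
        have hdegL2 : ∀ p ∈ S \ C, ∃ j', j' ≠ p.2 ∧ (p.1, j') ∈ S \ C := by
          intro p hp
          obtain ⟨j', hj', hjS⟩ := hdegL p (Finset.mem_sdiff.1 hp).1
          refine ⟨j', hj', Finset.mem_sdiff.2 ⟨hjS, ?_⟩⟩
          intro hC2
          exact hfstC p hp (p.1, j') hC2 rfl
        have hdegR2 : ∀ p ∈ S \ C, ∃ i', i' ≠ p.1 ∧ (i', p.2) ∈ S \ C := by
          intro p hp
          obtain ⟨i', hi', hiS⟩ := hdegR p (Finset.mem_sdiff.1 hp).1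
          refine ⟨i', hi', Finset.mem_sdiff.2 ⟨hiS, ?_⟩⟩
          intro hC2
          -- (i', p.2) ∈ C, and (i', p.2).1 = i'.  We need a contradiction differently:
          -- use the snd-version of hfstC
          exact hsndC p hp (i', p.2) hC2 rfl
        obtain ⟨k₂, I₂, J₂, hk₂, hI₂, hJ₂, hC₂S⟩ :=
          exists_cycle_of_min_degree_two (S \ C) hSCne hdegL2 hdegR2
        have hCF : ∀ D : Finset (Fin m × Fin n), D ⊆ S → IsSimpleCycle D →
            ∃ f ∈ D, f ∈ F' := by
          intro D hDS hD
          by_contra hno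
          push_neg at hno
          refine hE' D ?_ hD
          intro p hp
          have hpE : p ∈ E' ∪ F' := by rw [← hEE]; exact hSE (hDS hp)
          rcases Finset.mem_union.1 hpE with h | h
          · exact h
          · exact absurd h (hno p hp)
        obtain ⟨f₁, hf₁C, hf₁F⟩ := hCF C hCS (isSimpleCycle_cycEdges hk hI hJ)
        obtain ⟨f₂, hf₂C, hf₂F⟩ := hCF (cycEdges k₂ I₂ J₂)
          ((hC₂S.trans Finset.sdiff_subset)) (isSimpleCycle_cycEdges hk₂ hI₂ hJ₂)
        have hf12 : f₁ = f₂ := Finset.card_le_one.1 hF' f₁ hf₁F f₂ hf₂F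
        have hf₂SC : f₂ ∈ S \ C := hC₂S hf₂C
        rw [← hf12] at hf₂SC
        exact (Finset.mem_sdiff.1 hf₂SC).2 hf₁C
      -- now S is exactly the cycle C; propagate values of y around it
      have hyC : ∀ p, p ∉ C → y p = 0 := by
        intro p hp
        by_contra h
        exact hp (hSC ▸ (hSmem p).2 h)
      have hreq : ∀ ℓ, ℓ < k → y (I ℓ, J ℓ) + y (I ((ℓ + 1) % k), J ℓ) = 0 := by
        intro ℓ hℓ
        have hsucclt : (ℓ + 1) % k < k := Nat.mod_lt _ hk0
        have hIne : I ℓ ≠ I ((ℓ + 1) % k) := by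
          intro heq
          exact mod_succ_ne hk hℓ
            (hI (Set.mem_Iio.2 hsucclt) (Set.mem_Iio.2 hℓ) heq.symm)
        have h := hcolsum (J ℓ)
        have hz : ∀ i : Fin m, i ∈ (Finset.univ : Finset (Fin m)) →
            i ∉ ({I ℓ, I ((ℓ + 1) % k)} : Finset (Fin m)) → y (i, J ℓ) = 0 := by
          intro i _ hi
          apply hyC
          intro hiC
          obtain ⟨ℓ', hℓ', h'⟩ := mem_cycEdges.1 hiC
          rcases h' with h' | h'
          · have hJeq : J ℓ = J ℓ' := congrArg Prod.snd h'
            have hℓeq : ℓ = ℓ' := hJ (Set.mem_Iio.2 hℓ) (Set.mem_Iio.2 hℓ') hJeq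
            have : i = I ℓ := by
              rw [hℓeq]; exact congrArg Prod.fst h'
            exact hi (Finset.mem_insert.2 (Or.inl this))
          · have hJeq : J ℓ = J ℓ' := congrArg Prod.snd h'
            have hℓeq : ℓ = ℓ' := hJ (Set.mem_Iio.2 hℓ) (Set.mem_Iio.2 hℓ') hJeq
            have : i = I ((ℓ + 1) % k) := by
              rw [hℓeq]; exact congrArg Prod.fst h'
            exact hi (Finset.mem_insert.2 (Or.inr (Finset.mem_singleton.2 this)))
        rw [← Finset.sum_subset
          (Finset.subset_univ ({I ℓ, I ((ℓ + 1) % k)} : Finset (Fin m))) hz] at h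
        rw [Finset.sum_pair hIne] at h
        exact h
      have hleq : ∀ ℓ, ℓ < k →
          y (I ℓ, J ℓ) + y (I ℓ, J ((ℓ + (k - 1)) % k)) = 0 := by
        intro ℓ hℓ
        have hprevlt : (ℓ + (k - 1)) % k < k := Nat.mod_lt _ hk0
        have hJne : J ℓ ≠ J ((ℓ + (k - 1)) % k) := by
          intro heq
          exact mod_prev_ne hk hℓ
            (hJ (Set.mem_Iio.2 hprevlt) (Set.mem_Iio.2 hℓ) heq.symm)
        have h := hrowsum (I ℓ)
        have hz : ∀ j : Fin n, j ∈ (Finset.univ : Finset (Fin n)) →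
            j ∉ ({J ℓ, J ((ℓ + (k - 1)) % k)} : Finset (Fin n)) → y (I ℓ, j) = 0 := by
          intro j _ hj
          apply hyC
          intro hjC
          obtain ⟨ℓ', hℓ', h'⟩ := mem_cycEdges.1 hjC
          rcases h' with h' | h'
          · have hIeq : I ℓ = I ℓ' := congrArg Prod.fst h'
            have hℓeq : ℓ = ℓ' := hI (Set.mem_Iio.2 hℓ) (Set.mem_Iio.2 hℓ') hIeq
            have : j = J ℓ := by
              rw [hℓeq]; exact congrArg Prod.snd h'
            exact hj (Finset.mem_insert.2 (Or.inl this))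
          · have hIeq : I ℓ = I ((ℓ' + 1) % k) := congrArg Prod.fst h'
            have hsucclt' : (ℓ' + 1) % k < k := Nat.mod_lt _ hk0
            have hℓeq : ℓ = (ℓ' + 1) % k :=
              hI (Set.mem_Iio.2 hℓ) (Set.mem_Iio.2 hsucclt') hIeq
            have hℓ'eq : ℓ' = (ℓ + (k - 1)) % k := by
              have hrt := mod_succ_prev hk hℓ'
              rw [← hℓeq] at hrt
              · exact hrt.symm
            have : j = J ((ℓ + (k - 1)) % k) := by
              rw [← hℓ'eq]; exact congrArg Prod.snd h'
            exact hj (Finset.mem_insert.2 (Or.inr (Finset.mem_singleton.2 this)))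
        rw [← Finset.sum_subset
          (Finset.subset_univ ({J ℓ, J ((ℓ + (k - 1)) % k)} : Finset (Fin n))) hz] at h
        rw [Finset.sum_pair hJne] at h
        exact h
      have hconst : ∀ ℓ, ℓ < k → y (I ℓ, J ℓ) = y (I 0, J 0) := by
        intro ℓ
        induction ℓ with
        | zero => intro _; rfl
        | succ ℓ ih =>
          intro hℓ
          have hℓk : ℓ < k := by omega
          have h1 := hreq ℓ hℓk
          rw [Nat.mod_eq_of_lt hℓ] at h1
          have h2 := hleq (ℓ + 1) hℓ
          have hprev : (ℓ + 1 + (k - 1)) % k = ℓ := by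
            have he : ℓ + 1 + (k - 1) = ℓ + k := by omega
            rw [he, Nat.add_mod_right, Nat.mod_eq_of_lt hℓk]
          rw [hprev] at h2
          have h3 := ih hℓk
          linear_combination h2 - h1 + h3
      have hought : ∀ ℓ, ℓ < k → y (I ((ℓ + 1) % k), J ℓ) = - y (I 0, J 0) := by
        intro ℓ hℓ
        have h1 := hreq ℓ hℓ
        have h2 := hconst ℓ hℓ
        linear_combination h1 - h2
      have hdisj : Disjoint ((Finset.range k).image fun ℓ => (I ℓ, J ℓ))
          ((Finset.range k).image fun ℓ => (I ((ℓ + 1) % k), J ℓ)) := by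
        rw [Finset.disjoint_left]
        rintro p hp1 hp2
        obtain ⟨a, ha, rfl⟩ := Finset.mem_image.1 hp1
        obtain ⟨b, hb, heq⟩ := Finset.mem_image.1 hp2
        rw [Finset.mem_range] at ha hb
        have hJab : J b = J a := congrArg Prod.snd heq
        have hba : b = a := hJ (Set.mem_Iio.2 hb) (Set.mem_Iio.2 ha) hJab
        subst hba
        have hIb : I ((b + 1) % k) = I b := congrArg Prod.fst heq
        exact mod_succ_ne hk hb
          (hI (Set.mem_Iio.2 (Nat.mod_lt _ hk0)) (Set.mem_Iio.2 hb) hIb)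
      have hsumC : ∑ p ∈ C, γ p * y p = 0 := by
        rw [← hglob]
        exact Finset.sum_subset (Finset.subset_univ C)
          (fun p _ hp => by rw [hyC p hp, mul_zero])
      rw [hCdef, cycEdges, Finset.sum_union hdisj,
        Finset.sum_image (fun a ha b hb h =>
          hJ (Set.mem_Iio.2 (Finset.mem_range.1 ha)) (Set.mem_Iio.2 (Finset.mem_range.1 hb))
            (congrArg Prod.snd h)),
        Finset.sum_image (fun a ha b hb h =>
          hJ (Set.mem_Iio.2 (Finset.mem_range.1 ha)) (Set.mem_Iio.2 (Finset.mem_range.1 hb))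
            (congrArg Prod.snd h))] at hsumC
      have hfinal : y (I 0, J 0) *
          (∑ ℓ ∈ Finset.range k, (γ (I ℓ, J ℓ) - γ (I ((ℓ + 1) % k), J ℓ))) = 0 := by
        rw [Finset.mul_sum, ← hsumC, ← Finset.sum_add_distrib]
        apply Finset.sum_congr rfl
        intro ℓ hℓ
        have hℓk := Finset.mem_range.1 hℓ
        rw [hconst ℓ hℓk, hought ℓ hℓk]
        ring
      have ht0 : y (I 0, J 0) ≠ 0 := by
        apply (hSmem _).1
        rw [hSC]
        exact mem_cycEdges.2 ⟨0, by omega, Or.inl rfl⟩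
      rcases mul_eq_zero.1 hfinal with h | h
      · exact ht0 h
      · exact hcyc k hk I J hI hJ h
    · funext e
      by_contra hxe
      apply hSne
      refine ⟨(e : Fin m × Fin n), (hSmem _).2 ?_⟩
      rw [hydef]
      dsimp only
      rw [dif_pos e.2, Subtype.coe_eta]
      simpa using hxe
  have h1 : A.rank = Module.finrank F (LinearMap.range A.mulVecLin) := rfl
  rw [h1, LinearMap.finrank_range_of_inj hinj, Module.finrank_pi, Fintype.card_coe]
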